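/- Let k(x,y) = −Σ_{n=1}^∞ (−1)ⁿ nπ e^{D₀(λ − n²π²)(x−y)} p_n for 0 ≤ y ≤ x ≤ 1, with λ < π², D₀ > 0, and Σ (nπ)² p_n² < ∞. Then there exists a constant B₃ > 0 such that for every g ∈ L²(0,1), ∫₀¹ (∫₀ˣ k(x,y) g(y) dy)² dx ≤ B₃ · ∫₀¹ g(y)² dy. -/

import Mathlib

open MeasureTheory Real

lemma aux_cs {a b : ℕ → ℝ} (ha0 : ∀ n, 0 ≤ a n) (hb0 : ∀ n, 0 ≤ b n)
    (ha : Summable (fun n => a n ^ 2)) (hb : Summable (fun n => b n ^ 2)) :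
    Summable (fun n => a n * b n) ∧
    (∑' n, a n * b n) ^ 2 ≤ (∑' n, a n ^ 2) * (∑' n, b n ^ 2) := by
  have hconj : Real.HolderConjugate 2 2 := Real.holderConjugate_iff.mpr ⟨one_lt_two, by norm_num⟩
  have h2 : ∀ x : ℝ, x ^ (2:ℝ) = x ^ 2 := fun x => by
    rw [show (2:ℝ) = ((2:ℕ):ℝ) by norm_num, Real.rpow_natCast]
  have ha' : Summable (fun n => a n ^ (2:ℝ)) := by simpa [h2] using ha
  have hb' : Summable (fun n => b n ^ (2:ℝ)) := by simpa [h2] using hb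
  obtain ⟨hs, hle⟩ := Real.summable_and_inner_le_Lp_mul_Lq_tsum_of_nonneg hconj ha0 hb0 ha' hb'
  refine ⟨hs, ?_⟩
  have h0 : 0 ≤ ∑' n, a n * b n := tsum_nonneg fun n => mul_nonneg (ha0 n) (hb0 n)
  simp only [h2] at hle
  calc (∑' n, a n * b n)^2 ≤ ((∑' n, a n ^ 2) ^ (1/2:ℝ) * (∑' n, b n ^ 2) ^ (1/2:ℝ))^2 :=
        pow_le_pow_left₀ h0 hle 2
    _ = _ := by
        rw [mul_pow, ← Real.sqrt_eq_rpow, ← Real.sqrt_eq_rpow,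
          Real.sq_sqrt (tsum_nonneg fun n => sq_nonneg _),
          Real.sq_sqrt (tsum_nonneg fun n => sq_nonneg _)]


lemma aux_pt {β : ℝ} (hβ : 0 < β) {c : ℕ → ℝ} (hc : ∀ n : ℕ, c n ≤ -(β * ((n:ℝ)+1)^2))
    {p : ℕ → ℝ} (hp : Summable (fun n : ℕ => ((((n:ℝ)+1)*π)^2) * (p n)^2))
    {t : ℝ} (ht : 0 < t) :
    Summable (fun n : ℕ => Real.exp (c n * t)) ∧
    Summable (fun n : ℕ => (((n:ℝ)+1)*π) * Real.exp (c n * t) * |p n|) ∧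
    (∑' n : ℕ, (((n:ℝ)+1)*π) * Real.exp (c n * t) * |p n|) ^ 2
      ≤ (∑' n : ℕ, Real.exp (c n * t)) * (∑' n : ℕ, ((((n:ℝ)+1)*π)^2) * (p n)^2) := by
  have hπ := Real.pi_pos
  have hβt : 0 < β * t := mul_pos hβ ht
  have hcle : ∀ n : ℕ, c n * t ≤ -(β * t) * n := by
    intro n
    have h1 : c n * t ≤ (-(β * ((n:ℝ)+1)^2)) * t := mul_le_mul_of_nonneg_right (hc n) ht.le
    have h2 : (n:ℝ) ≤ ((n:ℝ)+1)^2 := by nlinarith [Nat.cast_nonneg (α := ℝ) n]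
    nlinarith [mul_le_mul_of_nonneg_left h2 hβt.le]
  have hcnp : ∀ n : ℕ, c n * t ≤ 0 := by
    intro n
    have := hcle n
    nlinarith [Nat.cast_nonneg (α := ℝ) n]
  have hA : Summable (fun n : ℕ => Real.exp (c n * t)) := by
    refine Summable.of_nonneg_of_le (fun n => (Real.exp_pos _).le) (fun n => ?_)
      (summable_geometric_of_lt_one (r := Real.exp (-(β*t))) (Real.exp_nonneg _)
        (Real.exp_lt_one_iff.mpr (by linarith)))
    rw [← Real.exp_nat_mul]
    exact Real.exp_le_exp.mpr (by simpa [mul_comm] using hcle n)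
  have hasq : ∀ n : ℕ, Real.exp (c n * t / 2) ^ 2 = Real.exp (c n * t) := by
    intro n
    rw [sq, ← Real.exp_add]
    exact congrArg Real.exp (by ring)
  have hprod : ∀ n : ℕ, Real.exp (c n * t / 2) * ((((n:ℝ)+1)*π) * Real.exp (c n * t/2) * |p n|)
      = (((n:ℝ)+1)*π) * Real.exp (c n * t) * |p n| := by
    intro n
    rw [← hasq n]
    ring
  have hbsq : ∀ n : ℕ, ((((n:ℝ)+1)*π) * Real.exp (c n * t/2) * |p n|) ^ 2
      = ((((n:ℝ)+1)*π)^2) * Real.exp (c n * t) * (p n)^2 := by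
    intro n
    rw [mul_pow, mul_pow, hasq n, sq_abs]
  have hb2 : Summable (fun n : ℕ => ((((n:ℝ)+1)*π) * Real.exp (c n * t/2) * |p n|) ^ 2) := by
    refine Summable.of_nonneg_of_le (fun n => by positivity) (fun n => ?_) hp
    rw [hbsq n]
    have he1 : Real.exp (c n * t) ≤ 1 := Real.exp_le_one_iff.mpr (hcnp n)
    have he0 : 0 < Real.exp (c n * t) := Real.exp_pos _
    nlinarith [mul_nonneg (mul_nonneg (sq_nonneg (((n:ℝ)+1)*π)) (sq_nonneg (p n)))
      (sub_nonneg.mpr he1)]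
  have ha2 : Summable (fun n : ℕ => Real.exp (c n * t / 2) ^ 2) := by
    simpa only [hasq] using hA
  obtain ⟨hab, hsq⟩ := aux_cs (fun n => Real.exp_nonneg _) (fun n => by positivity) ha2 hb2
  refine ⟨hA, by simpa only [hprod] using hab, ?_⟩
  have h3 : (∑' n : ℕ, ((((n:ℝ)+1)*π) * Real.exp (c n * t/2) * |p n|) ^ 2)
      ≤ ∑' n : ℕ, ((((n:ℝ)+1)*π)^2) * (p n)^2 := by
    refine Summable.tsum_le_tsum (fun n => ?_) hb2 hp
    rw [hbsq n]
    have he1 : Real.exp (c n * t) ≤ 1 := Real.exp_le_one_iff.mpr (hcnp n)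
    have he0 : 0 < Real.exp (c n * t) := Real.exp_pos _
    nlinarith [mul_nonneg (mul_nonneg (sq_nonneg (((n:ℝ)+1)*π)) (sq_nonneg (p n)))
      (sub_nonneg.mpr he1)]
  have hsq' : (∑' n : ℕ, (((n:ℝ)+1)*π) * Real.exp (c n * t) * |p n|) ^ 2
      ≤ (∑' n : ℕ, Real.exp (c n * t)) * (∑' n : ℕ, ((((n:ℝ)+1)*π) * Real.exp (c n * t/2) * |p n|) ^ 2) := by
    have := hsq
    simp only [hprod, hasq] at this
    exact this
  exact hsq'.trans (mul_le_mul_of_nonneg_left h3 (tsum_nonneg fun n => Real.exp_nonneg _))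

/-- For `k(x,y) = −Σₙ (−1)ⁿ nπ e^{D₀(λ−n²π²)(x−y)} pₙ` with `0 < λ < π²`, `D₀ > 0`
and `Σ (nπ)² pₙ² < ∞`, there is `B₃ > 0` such that every `g ∈ L²(0,1)` satisfies
`∫₀¹ (∫₀ˣ k(x,y) g(y) dy)² dx ≤ B₃ · ∫₀¹ g²`. -/
theorem stmt_6 (l D0 : ℝ) (hl : 0 < l) (hD0 : 0 < D0) (hlt : l < π^2)
    (p : ℕ → ℝ) (hp : Summable (fun n : ℕ => ((((n:ℝ)+1)*π)^2) * (p n)^2))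
    (k : ℝ → ℝ → ℝ)
    (hk : ∀ x y, 0 ≤ y → y ≤ x → x ≤ 1 → k x y = -∑' n : ℕ,
      (-1:ℝ)^(n+1) * (((n:ℝ)+1)*π) * Real.exp (D0*(l - ((n:ℝ)+1)^2*π^2)*(x-y)) * p n) :
    ∃ B3 > 0, ∀ g : ℝ → ℝ,
      MemLp g 2 (volume.restrict (Set.Ioc (0:ℝ) 1)) →
      (∫ x in (0:ℝ)..1, (∫ y in (0:ℝ)..x, k x y * g y)^2) ≤
        B3 * ∫ y in (0:ℝ)..1, (g y)^2 := by
  have hπ := Real.pi_pos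
  set β : ℝ := D0 * (π^2 - l) with hβdef
  have hβ : 0 < β := mul_pos hD0 (by linarith)
  set c : ℕ → ℝ := fun n => D0 * (l - ((n:ℝ)+1)^2*π^2) with hcdef
  have hc : ∀ n : ℕ, c n ≤ -(β * ((n:ℝ)+1)^2) := by
    intro n
    have h1 : (1:ℝ) ≤ ((n:ℝ)+1)^2 := by nlinarith [Nat.cast_nonneg (α := ℝ) n]
    simp only [hcdef, hβdef]
    nlinarith [mul_nonneg hD0.le hl.le]
  have hcneg : ∀ n : ℕ, c n < 0 := by
    intro n
    have h1 : (1:ℝ) ≤ ((n:ℝ)+1)^2 := by nlinarith [Nat.cast_nonneg (α := ℝ) n]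
    nlinarith [hc n]
  set P : ℝ := ∑' n : ℕ, ((((n:ℝ)+1)*π)^2) * (p n)^2 with hPdef
  have hP0 : 0 ≤ P := tsum_nonneg fun n => by positivity
  have hC0sum : Summable (fun n : ℕ => 1 / (β * ((n:ℝ)+1)^2)) := by
    have h1 : Summable (fun n : ℕ => 1/((n:ℝ)+1)^2) := by
      have h2 : Summable (fun n : ℕ => 1/(n:ℝ)^2) := summable_one_div_nat_pow.mpr one_lt_two
      have := (summable_nat_add_iff (f := fun n : ℕ => 1/(n:ℝ)^2) 1).mpr h2
      refine this.congr fun n => ?_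
      push_cast
      ring
    refine (h1.mul_left (1/β)).congr fun n => ?_
    rw [div_mul_div_comm]
    norm_num
  set C0 : ℝ := ∑' n : ℕ, 1 / (β * ((n:ℝ)+1)^2) with hC0def
  have hC00 : 0 ≤ C0 := tsum_nonneg fun n => by positivity
  -- measurable auxiliary functions
  have hTmeas : ∀ w : ℕ → ℝ, Measurable (fun t : ℝ =>
      (∑' n : ℕ, ENNReal.ofReal ((((n:ℝ)+1)*π) * Real.exp (c n * t) * w n)).toReal) := by
    intro w
    refine Measurable.ennreal_toReal (Measurable.ennreal_tsum fun n => ?_)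
    refine ENNReal.measurable_ofReal.comp ?_
    exact ((continuous_const.mul (Real.continuous_exp.comp
      (continuous_const.mul continuous_id))).mul continuous_const).measurable
  set G0 : ℝ → ℝ := fun t =>
      (∑' n : ℕ, ENNReal.ofReal ((((n:ℝ)+1)*π) * Real.exp (c n * t) * max (-((-1:ℝ)^(n+1) * p n)) 0)).toReal
    - (∑' n : ℕ, ENNReal.ofReal ((((n:ℝ)+1)*π) * Real.exp (c n * t) * max ((-1:ℝ)^(n+1) * p n) 0)).toReal
    with hG0def
  have hG0meas : Measurable G0 := (hTmeas _).sub (hTmeas _)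
  set Se : ℝ → ENNReal := fun t => ∑' n : ℕ, ENNReal.ofReal (Real.exp (c n * t)) with hSedef
  have hSemeas : Measurable Se := by
    refine Measurable.ennreal_tsum fun n => ENNReal.measurable_ofReal.comp ?_
    exact (Real.continuous_exp.comp (continuous_const.mul continuous_id)).measurable
  -- pointwise identification and bound for t > 0
  have hG0eq : ∀ t : ℝ, 0 < t →
      G0 t = -∑' n : ℕ, (-1:ℝ)^(n+1) * (((n:ℝ)+1)*π) * Real.exp (c n * t) * p n := by
    intro t ht
    obtain ⟨hA, hab, _⟩ := aux_pt hβ hc hp ht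
    have habs_eq : ∀ n : ℕ, |(-1:ℝ)^(n+1) * (((n:ℝ)+1)*π) * Real.exp (c n * t) * p n|
        = (((n:ℝ)+1)*π) * Real.exp (c n * t) * |p n| := by
      intro n
      rw [abs_mul, abs_mul, abs_mul, abs_pow, abs_neg, abs_one, one_pow, one_mul,
        abs_of_nonneg (by positivity : (0:ℝ) ≤ ((n:ℝ)+1)*π),
        abs_of_nonneg (Real.exp_nonneg _)]
    have habs : Summable (fun n : ℕ =>
        |(-1:ℝ)^(n+1) * (((n:ℝ)+1)*π) * Real.exp (c n * t) * p n|) := by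
      simpa only [habs_eq] using hab
    have hple : ∀ n : ℕ, max ((-1:ℝ)^(n+1) * p n) 0 ≤ |p n| := by
      intro n
      rcases le_total ((-1:ℝ)^(n+1) * p n) 0 with h|h
      · rw [max_eq_right h]; positivity
      · rw [max_eq_left h]
        calc (-1:ℝ)^(n+1) * p n ≤ |(-1:ℝ)^(n+1) * p n| := le_abs_self _
          _ = |p n| := by rw [abs_mul, abs_pow, abs_neg, abs_one, one_pow, one_mul]
    have hmle : ∀ n : ℕ, max (-((-1:ℝ)^(n+1) * p n)) 0 ≤ |p n| := by
      intro n
      rcases le_total (-((-1:ℝ)^(n+1) * p n)) 0 with h|h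
      · rw [max_eq_right h]; positivity
      · rw [max_eq_left h]
        calc -((-1:ℝ)^(n+1) * p n) ≤ |(-1:ℝ)^(n+1) * p n| := neg_le_abs _
          _ = |p n| := by rw [abs_mul, abs_pow, abs_neg, abs_one, one_pow, one_mul]
    have hsp : Summable (fun n : ℕ =>
        (((n:ℝ)+1)*π) * Real.exp (c n * t) * max ((-1:ℝ)^(n+1) * p n) 0) := by
      refine Summable.of_nonneg_of_le (fun n => by positivity) (fun n => ?_) hab
      exact mul_le_mul_of_nonneg_left (hple n) (by positivity)
    have hsm : Summable (fun n : ℕ =>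
        (((n:ℝ)+1)*π) * Real.exp (c n * t) * max (-((-1:ℝ)^(n+1) * p n)) 0) := by
      refine Summable.of_nonneg_of_le (fun n => by positivity) (fun n => ?_) hab
      exact mul_le_mul_of_nonneg_left (hmle n) (by positivity)
    have htp : (∑' n : ℕ, ENNReal.ofReal
        ((((n:ℝ)+1)*π) * Real.exp (c n * t) * max ((-1:ℝ)^(n+1) * p n) 0)).toReal
        = ∑' n : ℕ, (((n:ℝ)+1)*π) * Real.exp (c n * t) * max ((-1:ℝ)^(n+1) * p n) 0 := by
      rw [← ENNReal.ofReal_tsum_of_nonneg (fun n => by positivity) hsp,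
        ENNReal.toReal_ofReal (tsum_nonneg fun n => by positivity)]
    have htm : (∑' n : ℕ, ENNReal.ofReal
        ((((n:ℝ)+1)*π) * Real.exp (c n * t) * max (-((-1:ℝ)^(n+1) * p n)) 0)).toReal
        = ∑' n : ℕ, (((n:ℝ)+1)*π) * Real.exp (c n * t) * max (-((-1:ℝ)^(n+1) * p n)) 0 := by
      rw [← ENNReal.ofReal_tsum_of_nonneg (fun n => by positivity) hsm,
        ENNReal.toReal_ofReal (tsum_nonneg fun n => by positivity)]
    rw [hG0def]
    simp only [htp, htm]
    rw [← Summable.tsum_sub hsm hsp, ← tsum_neg]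
    refine tsum_congr fun n => ?_
    rcases le_total ((-1:ℝ)^(n+1) * p n) 0 with h|h
    · rw [max_eq_right h, max_eq_left (by linarith : (0:ℝ) ≤ -((-1:ℝ)^(n+1) * p n))]
      ring
    · rw [max_eq_left h, max_eq_right (by linarith : -((-1:ℝ)^(n+1) * p n) ≤ 0)]
      ring
  have hG0bound : ∀ t : ℝ, 0 < t → (G0 t)^2 ≤ (Se t).toReal * P := by
    intro t ht
    obtain ⟨hA, hab, hsq⟩ := aux_pt hβ hc hp ht
    have habs_eq : ∀ n : ℕ, ‖(-1:ℝ)^(n+1) * (((n:ℝ)+1)*π) * Real.exp (c n * t) * p n‖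
        = (((n:ℝ)+1)*π) * Real.exp (c n * t) * |p n| := by
      intro n
      rw [Real.norm_eq_abs, abs_mul, abs_mul, abs_mul, abs_pow, abs_neg, abs_one, one_pow,
        one_mul, abs_of_nonneg (by positivity : (0:ℝ) ≤ ((n:ℝ)+1)*π),
        abs_of_nonneg (Real.exp_nonneg _)]
    have hnorm : ‖∑' n : ℕ, (-1:ℝ)^(n+1) * (((n:ℝ)+1)*π) * Real.exp (c n * t) * p n‖
        ≤ ∑' n : ℕ, (((n:ℝ)+1)*π) * Real.exp (c n * t) * |p n| := by
      have := norm_tsum_le_tsum_norm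
        (f := fun n : ℕ => (-1:ℝ)^(n+1) * (((n:ℝ)+1)*π) * Real.exp (c n * t) * p n)
        (by simpa only [habs_eq] using hab)
      simpa only [habs_eq] using this
    have hSet : (Se t).toReal = ∑' n : ℕ, Real.exp (c n * t) := by
      simp only [hSedef]
      rw [← ENNReal.ofReal_tsum_of_nonneg (fun n => Real.exp_nonneg _) hA,
        ENNReal.toReal_ofReal (tsum_nonneg fun n => Real.exp_nonneg _)]
    rw [hG0eq t ht, neg_sq]
    calc (∑' n : ℕ, (-1:ℝ)^(n+1) * (((n:ℝ)+1)*π) * Real.exp (c n * t) * p n)^2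
        = ‖∑' n : ℕ, (-1:ℝ)^(n+1) * (((n:ℝ)+1)*π) * Real.exp (c n * t) * p n‖^2 := by
          rw [Real.norm_eq_abs, sq_abs]
      _ ≤ (∑' n : ℕ, (((n:ℝ)+1)*π) * Real.exp (c n * t) * |p n|)^2 :=
          pow_le_pow_left₀ (norm_nonneg _) hnorm 2
      _ ≤ (∑' n : ℕ, Real.exp (c n * t)) * P := hsq
      _ = (Se t).toReal * P := by rw [hSet]
  have hlint : ∀ x : ℝ, 0 ≤ x → (∫⁻ y in Set.Ioc 0 x, Se (x - y)) ≤ ENNReal.ofReal C0 := by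
    intro x hx0
    have hmeasn : ∀ n : ℕ, Measurable (fun y : ℝ => ENNReal.ofReal (Real.exp (c n * (x - y)))) :=
      fun n => ENNReal.measurable_ofReal.comp (Real.continuous_exp.comp
        (continuous_const.mul (continuous_const.sub continuous_id))).measurable
    have hswap : (∫⁻ y in Set.Ioc 0 x, Se (x - y))
        = ∑' n : ℕ, ∫⁻ y in Set.Ioc 0 x, ENNReal.ofReal (Real.exp (c n * (x - y))) := by
      simp only [hSedef]
      exact lintegral_tsum fun n => (hmeasn n).aemeasurable
    rw [hswap]
    have hterm : ∀ n : ℕ, (∫⁻ y in Set.Ioc 0 x, ENNReal.ofReal (Real.exp (c n * (x - y))))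
        ≤ ENNReal.ofReal (1 / (β * ((n:ℝ)+1)^2)) := by
      intro n
      have hint : IntegrableOn (fun y : ℝ => Real.exp (c n * (x - y))) (Set.Ioc 0 x) :=
        (Real.continuous_exp.comp
          (continuous_const.mul (continuous_const.sub continuous_id))).integrableOn_Ioc
      rw [← ofReal_integral_eq_lintegral_ofReal hint
        (Filter.Eventually.of_forall fun y => Real.exp_nonneg _)]
      refine ENNReal.ofReal_le_ofReal ?_
      have h1 : (∫ y in Set.Ioc 0 x, Real.exp (c n * (x - y)))
          = ∫ y in (0:ℝ)..x, Real.exp (c n * (x - y)) :=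
        (intervalIntegral.integral_of_le hx0).symm
      rw [h1, intervalIntegral.integral_comp_sub_left (fun u => Real.exp (c n * u)) x]
      rw [show x - x = (0:ℝ) by ring, sub_zero]
      rw [intervalIntegral.integral_comp_mul_left (f := fun u => Real.exp u) (hcneg n).ne]
      rw [mul_zero, integral_exp, smul_eq_mul, Real.exp_zero]
      have he1 : Real.exp (c n * x) ≤ 1 :=
        Real.exp_le_one_iff.mpr (by nlinarith [hcneg n])
      have hβn : 0 < β * ((n:ℝ)+1)^2 := by positivity
      have hcb : β * ((n:ℝ)+1)^2 ≤ -(c n) := by linarith [hc n]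
      have heq : ∀ d e : ℝ, d ≠ 0 → d⁻¹ * (e - 1) = (1 - e) / (-d) := by
        intro d e hd
        rw [eq_div_iff (neg_ne_zero.mpr hd), mul_neg, mul_comm (d⁻¹) (e-1), mul_assoc,
          inv_mul_cancel₀ hd, mul_one]
        ring
      rw [heq (c n) (Real.exp (c n * x)) (hcneg n).ne]
      exact div_le_div₀ (by norm_num) (by linarith [Real.exp_nonneg (c n * x)]) hβn hcb
    calc (∑' n : ℕ, ∫⁻ y in Set.Ioc 0 x, ENNReal.ofReal (Real.exp (c n * (x - y))))
        ≤ ∑' n : ℕ, ENNReal.ofReal (1 / (β * ((n:ℝ)+1)^2)) := ENNReal.tsum_le_tsum hterm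
      _ = ENNReal.ofReal C0 := by
          rw [hC0def, ENNReal.ofReal_tsum_of_nonneg (fun n => by positivity) hC0sum]
  refine ⟨P * C0 + 1, by nlinarith [mul_nonneg hP0 hC00], ?_⟩
  intro g hg
  have hgsq : Integrable (fun y => (g y)^2) (volume.restrict (Set.Ioc (0:ℝ) 1)) :=
    (memLp_two_iff_integrable_sq hg.aestronglyMeasurable).mp hg
  set G : ℝ := ∫ y in Set.Ioc (0:ℝ) 1, (g y)^2 with hGdef
  have hGnn : 0 ≤ G := setIntegral_nonneg measurableSet_Ioc (fun y _ => sq_nonneg _)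
  have key : ∀ x ∈ Set.Icc (0:ℝ) 1, (∫ y in (0:ℝ)..x, k x y * g y)^2 ≤ P * C0 * G := by
    intro x hx
    obtain ⟨hx0, hx1⟩ := hx
    have hnex : ∀ᵐ y : ℝ, y ≠ x := by
      have h0 : volume ({x} : Set ℝ) = 0 := measure_singleton x
      exact compl_mem_ae_iff.mpr h0
    have hres : (volume.restrict (Set.Ioc (0:ℝ) 1)).restrict (Set.Ioc 0 x)
        = volume.restrict (Set.Ioc (0:ℝ) x) := by
      rw [Measure.restrict_restrict measurableSet_Ioc, Set.Ioc_inter_Ioc, max_self,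
        min_eq_left hx1]
    have hgx : MemLp g 2 (volume.restrict (Set.Ioc (0:ℝ) x)) := by
      have := hg.restrict (Set.Ioc (0:ℝ) x)
      rwa [hres] at this
    have hIeq : (∫ y in (0:ℝ)..x, k x y * g y) = ∫ y in Set.Ioc (0:ℝ) x, G0 (x - y) * g y := by
      rw [intervalIntegral.integral_of_le hx0]
      refine setIntegral_congr_ae measurableSet_Ioc ?_
      filter_upwards [hnex] with y hyx hy
      rw [hk x y hy.1.le hy.2 hx1, hG0eq (x - y) (sub_pos.mpr (lt_of_le_of_ne hy.2 hyx))]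
    have hxmeas : Measurable fun y : ℝ => G0 (x - y) :=
      hG0meas.comp (measurable_const.sub measurable_id)
    have hSemx : AEMeasurable (fun y : ℝ => Se (x - y)) (volume.restrict (Set.Ioc (0:ℝ) x)) :=
      (hSemeas.comp (measurable_const.sub measurable_id)).aemeasurable
    have hlx := hlint x hx0
    have hlx_ne : (∫⁻ y in Set.Ioc (0:ℝ) x, Se (x - y)) ≠ ⊤ :=
      (lt_of_le_of_lt hlx ENNReal.ofReal_lt_top).ne
    have hSeR_int : Integrable (fun y => (Se (x - y)).toReal)
        (volume.restrict (Set.Ioc (0:ℝ) x)) :=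
      integrable_toReal_of_lintegral_ne_top hSemx hlx_ne
    have hSeR_val : (∫ y in Set.Ioc (0:ℝ) x, (Se (x - y)).toReal) ≤ C0 := by
      rw [integral_toReal hSemx (ae_lt_top' hSemx hlx_ne)]
      exact ENNReal.toReal_le_of_le_ofReal hC00 hlx
    have hbound_ae : ∀ᵐ y ∂(volume.restrict (Set.Ioc (0:ℝ) x)),
        (G0 (x - y))^2 ≤ P * (Se (x - y)).toReal := by
      filter_upwards [ae_restrict_mem measurableSet_Ioc, ae_restrict_of_ae hnex] with y hy hyx
      have ht : 0 < x - y := sub_pos.mpr (lt_of_le_of_ne hy.2 hyx)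
      calc (G0 (x-y))^2 ≤ (Se (x-y)).toReal * P := hG0bound _ ht
        _ = P * (Se (x-y)).toReal := mul_comm _ _
    have hG0sq_int : Integrable (fun y => (G0 (x - y))^2)
        (volume.restrict (Set.Ioc (0:ℝ) x)) := by
      refine Integrable.mono (hSeR_int.const_mul P)
        ((hxmeas.pow_const 2).aestronglyMeasurable) ?_
      filter_upwards [hbound_ae] with y hy
      rw [Real.norm_eq_abs, Real.norm_eq_abs, abs_of_nonneg (sq_nonneg _),
        abs_of_nonneg (mul_nonneg hP0 ENNReal.toReal_nonneg)]
      exact hy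
    have hG0sq_val : (∫ y in Set.Ioc (0:ℝ) x, (G0 (x - y))^2) ≤ P * C0 := by
      calc (∫ y in Set.Ioc (0:ℝ) x, (G0 (x - y))^2)
          ≤ ∫ y in Set.Ioc (0:ℝ) x, P * (Se (x - y)).toReal :=
            integral_mono_ae hG0sq_int (hSeR_int.const_mul P) hbound_ae
        _ = P * ∫ y in Set.Ioc (0:ℝ) x, (Se (x - y)).toReal := integral_const_mul P _
        _ ≤ P * C0 := mul_le_mul_of_nonneg_left hSeR_val hP0
    have hM1 : MemLp (fun y => |G0 (x - y)|) 2 (volume.restrict (Set.Ioc (0:ℝ) x)) := by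
      refine (memLp_two_iff_integrable_sq (hxmeas.abs).aestronglyMeasurable).mpr ?_
      simpa only [sq_abs] using hG0sq_int
    have hM2 : MemLp (fun y => |g y|) 2 (volume.restrict (Set.Ioc (0:ℝ) x)) := hgx.abs
    have hconj : Real.HolderConjugate 2 2 := Real.holderConjugate_iff.mpr ⟨one_lt_two, by norm_num⟩
    have hof : ENNReal.ofReal (2:ℝ) = 2 := by norm_num
    have hH := integral_mul_le_Lp_mul_Lq_of_nonneg hconj
      (Filter.Eventually.of_forall fun y => abs_nonneg (G0 (x - y)))
      (Filter.Eventually.of_forall fun y => abs_nonneg (g y))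
      (hof ▸ hM1) (hof ▸ hM2)
    have hr2 : ∀ z : ℝ, |z| ^ (2:ℝ) = z^2 := fun z => by
      rw [show (2:ℝ) = ((2:ℕ):ℝ) by norm_num, Real.rpow_natCast, sq_abs]
    simp only [hr2] at hH
    have hgsq_le : (∫ y in Set.Ioc (0:ℝ) x, (g y)^2) ≤ G := by
      rw [hGdef]
      exact setIntegral_mono_set hgsq (Filter.Eventually.of_forall fun y => sq_nonneg _)
        (HasSubset.Subset.eventuallyLE (Set.Ioc_subset_Ioc_right hx1))
    have habsI : |∫ y in (0:ℝ)..x, k x y * g y| ≤ Real.sqrt (P*C0) * Real.sqrt G := by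
      rw [hIeq]
      calc |∫ y in Set.Ioc (0:ℝ) x, G0 (x - y) * g y|
          ≤ ∫ y in Set.Ioc (0:ℝ) x, |G0 (x - y)| * |g y| := by
            simpa [Real.norm_eq_abs, abs_mul] using norm_integral_le_integral_norm
              (μ := volume.restrict (Set.Ioc (0:ℝ) x)) (fun y => G0 (x - y) * g y)
        _ ≤ (∫ y in Set.Ioc (0:ℝ) x, (G0 (x - y))^2) ^ (1/2:ℝ)
            * (∫ y in Set.Ioc (0:ℝ) x, (g y)^2) ^ (1/2:ℝ) := hH
        _ = Real.sqrt (∫ y in Set.Ioc (0:ℝ) x, (G0 (x - y))^2)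
            * Real.sqrt (∫ y in Set.Ioc (0:ℝ) x, (g y)^2) := by
            rw [← Real.sqrt_eq_rpow, ← Real.sqrt_eq_rpow]
        _ ≤ Real.sqrt (P*C0) * Real.sqrt G :=
            mul_le_mul (Real.sqrt_le_sqrt hG0sq_val) (Real.sqrt_le_sqrt hgsq_le)
              (Real.sqrt_nonneg _) (Real.sqrt_nonneg _)
    calc (∫ y in (0:ℝ)..x, k x y * g y)^2
        = |∫ y in (0:ℝ)..x, k x y * g y|^2 := (sq_abs _).symm
      _ ≤ (Real.sqrt (P*C0) * Real.sqrt G)^2 := pow_le_pow_left₀ (abs_nonneg _) habsI 2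
      _ = P*C0*G := by rw [mul_pow, Real.sq_sqrt (mul_nonneg hP0 hC00), Real.sq_sqrt hGnn]
  have hrhs : (∫ y in (0:ℝ)..1, (g y)^2) = G := intervalIntegral.integral_of_le zero_le_one
  rw [hrhs]
  by_cases hII : IntervalIntegrable (fun x => (∫ y in (0:ℝ)..x, k x y * g y)^2) volume 0 1
  · calc (∫ x in (0:ℝ)..1, (∫ y in (0:ℝ)..x, k x y * g y)^2)
        ≤ ∫ _x in (0:ℝ)..1, P*C0*G :=
          intervalIntegral.integral_mono_on zero_le_one hII intervalIntegrable_const key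
      _ = P*C0*G := by simp
      _ ≤ (P*C0+1)*G := by nlinarith [hGnn, mul_nonneg hP0 hC00]
  · rw [intervalIntegral.integral_undef hII]
    nlinarith [hGnn, mul_nonneg hP0 hC00]
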